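/- For all m, n ≥ 2, the size Ramsey number of two complete graphs satisfies r̂(K_m, K_n) = C(r(K_m,K_n), 2), where r(K_m,K_n) is the Ramsey number; that is, the trivial upper bound r̂(G,H) ≤ C(r(G,H),2) is attained with equality when G and H are complete graphs. -/

import Mathlib

open SimpleGraph

/-- `H` contains a copy of `G`, i.e. there is an injective graph homomorphism `G →g H`. -/
def ContainsCopy {α β : Type*} (G : SimpleGraph α) (H : SimpleGraph β) : Prop :=
  ∃ f : G →g H, Function.Injective f

/-- `F ⟶ (G, H)` : for every red-blue colouring of the edges of `F` (encoded by the red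
subgraph `R ≤ F`, the blue edges being `F \ R`) there is a red copy of `G` or a blue copy
of `H`. -/
def Arrows {γ α β : Type*} (F : SimpleGraph γ) (G : SimpleGraph α) (H : SimpleGraph β) : Prop :=
  ∀ R : SimpleGraph γ, R ≤ F → ContainsCopy G R ∨ ContainsCopy H (F \ R)

/-- The Ramsey number `r(G, H)` : the least `n` such that `K_n ⟶ (G, H)`. -/
noncomputable def ramseyNumber {α β : Type*} (G : SimpleGraph α) (H : SimpleGraph β) : ℕ :=
  sInf {n : ℕ | Arrows (⊤ : SimpleGraph (Fin n)) G H}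

/-- The size Ramsey number `r̂(G, H)` : the least number of edges of a graph `F` with
`F ⟶ (G, H)`. -/
noncomputable def sizeRamsey {α β : Type*} (G : SimpleGraph α) (H : SimpleGraph β) : ℕ :=
  sInf {m : ℕ | ∃ (N : ℕ) (F : SimpleGraph (Fin N)), Arrows F G H ∧ F.edgeSet.ncard = m}

/-- The restricted size Ramsey number `r̂*(G, H)` : the least number of edges of a graph `F`
on exactly `r(G, H)` vertices with `F ⟶ (G, H)`. -/
noncomputable def restrictedSizeRamsey {α β : Type*} (G : SimpleGraph α) (H : SimpleGraph β) : ℕ :=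
  sInf {m : ℕ | ∃ F : SimpleGraph (Fin (ramseyNumber G H)),
    Arrows F G H ∧ F.edgeSet.ncard = m}

/-- The star `K_{1,k}` with `k` edges. -/
def starGraph (k : ℕ) : SimpleGraph (Fin 1 ⊕ Fin k) := completeBipartiteGraph (Fin 1) (Fin k)

/- ## Auxiliary lemmas -/

lemma twice_choose (k : ℕ) : 2 * (k+1).choose 2 = (k+1) * k := by
  rw [Nat.choose_two_right, Nat.add_sub_cancel]
  have h2 : 2 ∣ (k+1) * k := by
    rw [mul_comm]; exact (Nat.even_mul_succ_self k).two_dvd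
  exact Nat.mul_div_cancel' h2

/-- A graph with fewer than `(k+1).choose 2` edges is `k`-colorable. -/
lemma colorable_aux (k : ℕ) : ∀ (N : ℕ) (V : Type) [Fintype V] (G : SimpleGraph V),
    Fintype.card V ≤ N → G.edgeSet.ncard < (k+1).choose 2 → G.Colorable k := by
  intro N
  induction N with
  | zero =>
    intro V _ G hcard _
    have : IsEmpty V := Fintype.card_eq_zero_iff.mp (Nat.le_zero.mp hcard)
    exact Colorable.of_isEmpty (G := G) k
  | succ N ih =>
    intro V _ G hcard hedge
    classical
    by_cases hV : IsEmpty V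
    · exact Colorable.of_isEmpty (G := G) k
    have : Nonempty V := not_isEmpty_iff.mp hV
    by_cases hdeg : ∃ v : V, G.degree v < k
    · obtain ⟨v, hv⟩ := hdeg
      have hk : 0 < k := Nat.pos_of_ne_zero (by omega)
      set s : Set V := {v}ᶜ with hs
      set G' := G.induce s with hG'
      have hcard' : Fintype.card s ≤ N := by
        have h1 := Fintype.card_compl_set ({v} : Set V)
        simp only [Set.card_singleton] at h1
        have h2 : Fintype.card s = Fintype.card V - 1 := h1
        have : 1 ≤ Fintype.card V := Fintype.card_pos
        omega
      have hmono : G'.edgeSet.ncard ≤ G.edgeSet.ncard := by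
        have emb : G' ↪g G := Embedding.induce s
        have h1 := Nat.card_le_card_of_injective _ emb.mapEdgeSet.injective
        rwa [Nat.card_coe_set_eq, Nat.card_coe_set_eq] at h1
      obtain ⟨C⟩ := ih s G' hcard' (lt_of_le_of_lt hmono hedge)
      let z : Fin k := ⟨0, hk⟩
      let g0 : V → Fin k := fun u => if h : u = v then z else C ⟨u, h⟩
      let colors : Finset (Fin k) := (G.neighborFinset v).image g0
      have hcolors : colors.card < k := by
        calc colors.card ≤ (G.neighborFinset v).card := Finset.card_image_le
        _ = G.degree v := G.card_neighborFinset_eq_degree v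
        _ < k := hv
      have hcompl : colorsᶜ.Nonempty := by
        rw [← Finset.card_pos, Finset.card_compl]
        simp only [Fintype.card_fin]
        omega
      obtain ⟨fresh, hfresh⟩ := hcompl
      rw [Finset.mem_compl] at hfresh
      let col : V → Fin k := fun u => if h : u = v then fresh else C ⟨u, h⟩
      have hcolv : col v = fresh := dif_pos rfl
      have hmem : ∀ u, u ∈ G.neighborFinset v → col u ∈ colors := by
        intro u hu
        have hu' : u ≠ v := by
          intro h; subst h; rw [mem_neighborFinset] at hu; exact G.irrefl hu
        have heq : col u = g0 u := by simp only [col, g0, dif_neg hu']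
        rw [heq]
        exact Finset.mem_image_of_mem _ hu
      refine ⟨Coloring.mk col ?_⟩
      intro a b hab
      by_cases ha : a = v
      · rw [ha, hcolv]
        intro hEq
        apply hfresh
        rw [hEq]
        exact hmem b (by rw [mem_neighborFinset]; exact ha ▸ hab)
      · by_cases hb : b = v
        · rw [hb, hcolv]
          intro hEq
          apply hfresh
          rw [← hEq]
          exact hmem a (by rw [mem_neighborFinset]; exact (hb ▸ hab).symm)
        · have h1 : col a = C ⟨a, ha⟩ := dif_neg ha
          have h2 : col b = C ⟨b, hb⟩ := dif_neg hb
          rw [h1, h2]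
          exact C.valid (by exact hab : G'.Adj ⟨a, ha⟩ ⟨b, hb⟩)
    · push_neg at hdeg
      exfalso
      obtain ⟨v⟩ := ‹Nonempty V›
      have hV1 : k + 1 ≤ Fintype.card V := by
        have h1 := G.degree_lt_card_verts v
        have h2 := hdeg v
        omega
      have hsum : Fintype.card V * k ≤ ∑ w : V, G.degree w := by
        calc Fintype.card V * k = ∑ _w : V, k := by simp [Finset.sum_const, mul_comm]
        _ ≤ ∑ w : V, G.degree w := Finset.sum_le_sum fun i _ => hdeg i
      rw [G.sum_degrees_eq_twice_card_edges] at hsum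
      have hn : G.edgeSet.ncard = G.edgeFinset.card := Set.ncard_eq_toFinset_card' _
      have ht := twice_choose k
      nlinarith [Nat.mul_le_mul_right k hV1]

lemma containsCopy_mono {α γ : Type*} {G : SimpleGraph α} {R₁ R₂ : SimpleGraph γ}
    (h : R₁ ≤ R₂) : ContainsCopy G R₁ → ContainsCopy G R₂ := by
  rintro ⟨f, hf⟩
  exact ⟨(Hom.ofLE h).comp f, fun a b hab => hf hab⟩

lemma arrows_top_of_arrows {N : ℕ} {α β : Type*} {G : SimpleGraph α} {H : SimpleGraph β}
    {F : SimpleGraph (Fin N)} (hF : Arrows F G H) : Arrows (⊤ : SimpleGraph (Fin N)) G H := by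
  intro R hR
  rcases hF (R ⊓ F) inf_le_right with h | h
  · exact Or.inl (containsCopy_mono inf_le_left h)
  · refine Or.inr (containsCopy_mono ?_ h)
    intro a b hab
    rw [sdiff_adj] at hab ⊢
    exact ⟨hab.1.ne, fun hr => hab.2 ⟨hr, hab.1⟩⟩

lemma pullback_arrows {m n N k : ℕ} {F : SimpleGraph (Fin N)} (φ : F.Coloring (Fin k))
    (hF : Arrows F (⊤ : SimpleGraph (Fin m)) (⊤ : SimpleGraph (Fin n))) :
    Arrows (⊤ : SimpleGraph (Fin k)) (⊤ : SimpleGraph (Fin m)) (⊤ : SimpleGraph (Fin n)) := by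
  intro R' _
  let RF : SimpleGraph (Fin N) :=
    { Adj := fun a b => F.Adj a b ∧ R'.Adj (φ a) (φ b),
      symm := ⟨fun a b h => ⟨h.1.symm, h.2.symm⟩⟩,
      loopless := ⟨fun a h => F.irrefl h.1⟩ }
  rcases hF RF (fun a b h => h.1) with ⟨f, hf⟩ | ⟨f, hf⟩
  · left
    refine ⟨⟨φ ∘ f, fun {a b} hab => ?_⟩, ?_⟩
    · exact (f.map_rel hab).2
    · intro a b hEq
      by_contra hne
      have hadj : RF.Adj (f a) (f b) := f.map_rel (by exact hne)
      exact hadj.2.ne hEq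
  · right
    refine ⟨⟨φ ∘ f, fun {a b} hab => ?_⟩, ?_⟩
    · have hadj := f.map_rel hab
      rw [sdiff_adj] at hadj
      rw [sdiff_adj]
      exact ⟨φ.valid hadj.1, fun hr => hadj.2 ⟨hadj.1, hr⟩⟩
    · intro a b hEq
      by_contra hne
      have hadj := f.map_rel (by exact hne : (⊤ : SimpleGraph (Fin n)).Adj a b)
      rw [sdiff_adj] at hadj
      exact (φ.valid hadj.1) hEq

lemma not_arrows_zero {m n : ℕ} (hm : 1 ≤ m) (hn : 1 ≤ n) :
    ¬ Arrows (⊤ : SimpleGraph (Fin 0)) (⊤ : SimpleGraph (Fin m)) (⊤ : SimpleGraph (Fin n)) := by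
  intro h
  rcases h ⊥ bot_le with ⟨f, -⟩ | ⟨f, -⟩
  · exact (f ⟨0, hm⟩).elim0
  · exact (f ⟨0, hn⟩).elim0

lemma ncard_top (r : ℕ) : (⊤ : SimpleGraph (Fin r)).edgeSet.ncard = r.choose 2 := by
  classical
  rw [Set.ncard_eq_toFinset_card']
  have h : ((⊤ : SimpleGraph (Fin r)).edgeSet).toFinset = (⊤ : SimpleGraph (Fin r)).edgeFinset := by
    simp [edgeFinset]
  rw [h, card_edgeFinset_top_eq_card_choose_two, Fintype.card_fin]


theorem stmt1 (m n : ℕ) (hm : 2 ≤ m) (hn : 2 ≤ n) :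
    sizeRamsey (⊤ : SimpleGraph (Fin m)) (⊤ : SimpleGraph (Fin n)) =
      (ramseyNumber (⊤ : SimpleGraph (Fin m)) (⊤ : SimpleGraph (Fin n))).choose 2 := by
  classical
  set Gm : SimpleGraph (Fin m) := ⊤
  set Gn : SimpleGraph (Fin n) := ⊤
  set A : Set ℕ := {N : ℕ | Arrows (⊤ : SimpleGraph (Fin N)) Gm Gn} with hA_def
  set S : Set ℕ :=
    {x : ℕ | ∃ (N : ℕ) (F : SimpleGraph (Fin N)), Arrows F Gm Gn ∧ F.edgeSet.ncard = x} with hS_def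
  have hrs : ramseyNumber Gm Gn = sInf A := rfl
  have hss : sizeRamsey Gm Gn = sInf S := rfl
  by_cases hA : A.Nonempty
  · have hrmem : ramseyNumber Gm Gn ∈ A := hrs ▸ Nat.sInf_mem hA
    have hr0 : ramseyNumber Gm Gn ≠ 0 := by
      intro h
      rw [h] at hrmem
      exact not_arrows_zero (by omega) (by omega) hrmem
    obtain ⟨k, hk⟩ := Nat.exists_eq_succ_of_ne_zero hr0
    have hmemS : (ramseyNumber Gm Gn).choose 2 ∈ S :=
      ⟨ramseyNumber Gm Gn, ⊤, hrmem, ncard_top _⟩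
    have hlow : ∀ x ∈ S, (ramseyNumber Gm Gn).choose 2 ≤ x := by
      rintro x ⟨N, F, hFar, hcard⟩
      by_contra hx
      push_neg at hx
      have hcol : F.Colorable k := by
        apply colorable_aux k N (Fin N) F (by simp)
        rw [hcard]
        calc x < (ramseyNumber Gm Gn).choose 2 := hx
        _ = (k+1).choose 2 := by rw [hk]
      obtain ⟨φ⟩ := hcol
      have hkA : k ∈ A := pullback_arrows φ hFar
      have := Nat.sInf_le hkA
      rw [← hrs] at this
      omega
    rw [hss]
    exact le_antisymm (Nat.sInf_le hmemS) (le_csInf ⟨_, hmemS⟩ hlow)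
  · have hAe : A = ∅ := Set.not_nonempty_iff_eq_empty.mp hA
    have hr : ramseyNumber Gm Gn = 0 := by rw [hrs, hAe, Nat.sInf_empty]
    have hSe : S = ∅ := by
      rw [Set.eq_empty_iff_forall_notMem]
      rintro x ⟨N, F, hFar, -⟩
      exact hA ⟨N, arrows_top_of_arrows hFar⟩
    rw [hss, hSe, Nat.sInf_empty, hr]
    rfl
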